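/- Let A and B be C*-algebras, ⊗_* a fixed C*-tensor product of A and B, and let K_1 : X × X → A and K_2 : S × S → B be positive definite kernels on nonempty sets X and S. Then the kernel K : (X × S) × (X × S) → A ⊗_* B defined by K((x,s),(y,t)) = K_1(x,y) ⊗ K_2(s,t) is positive definite, i.e. ∑_{i,j=1}^n ξ_i* K((x_i,s_i),(x_j,s_j)) ξ_j ≥ 0 for all n, all (x_i,s_i) ∈ X × S, and all ξ_1, …, ξ_n ∈ A ⊗_* B. -/

import Mathlib

open scoped RightActions

/-- The Dec-2024 Mathlib notion of a Hilbert C*-module (right `A`-action via `Aᵐᵒᵖ`),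
restated here because Mathlib's `CStarModule` has since changed meaning (left action). -/
class OldCStarModule (A : outParam Type*) (E : Type*) [NonUnitalSemiring A] [StarRing A]
    [Module ℂ A] [AddCommGroup E] [Module ℂ E] [PartialOrder A] [SMul Aᵐᵒᵖ E] [Norm A] [Norm E]
    extends Inner A E where
  inner_add_right {x} {y} {z} : inner x (y + z) = inner x y + inner x z
  inner_self_nonneg {x} : 0 ≤ inner x x
  inner_self {x} : inner x x = 0 ↔ x = 0
  inner_op_smul_right {a : A} {x y : E} : inner x (y <• a) = inner x y * a
  inner_smul_right_complex {z : ℂ} {x} {y} : inner x (z • y) = z • inner x y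
  star_inner x y : star (inner x y) = inner y x
  norm_eq_sqrt_norm_inner_self x : ‖x‖ = Real.sqrt ‖inner x x‖

/-- A *reproducing kernel Hilbert C*-module* (RKHC*M) over the C*-algebra `A` on the set `S`:
a Hilbert C*-module `E` over `A` realized (injectively) as a right `A`-submodule of the
`A`-valued functions on `S` via `toFun`, together with kernel elements `k s` such that
evaluation at `s` is given by `f ↦ ⟪k s, f⟫`, and such that the `A`-linear span of the
`k s` is dense in `E`. -/
structure RKHCM (A : Type*) (S : Type*) (E : Type*)
    [CStarAlgebra A] [PartialOrder A] [StarOrderedRing A]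
    [NormedAddCommGroup E] [NormedSpace ℂ E] [SMul Aᵐᵒᵖ E] [OldCStarModule A E] where
  toFun : E → S → A
  injective : Function.Injective toFun
  k : S → E
  eval_eq : ∀ (f : E) (s : S), toFun f s = inner A (k s) f
  dense_span : Dense
    ((Submodule.span ℂ (Set.range fun p : S × A => k p.1 <• p.2) : Submodule ℂ E) : Set E)

/-- A positive definite `A`-valued kernel on `S`. -/
def IsPosDefKernel {A : Type*} [CStarAlgebra A] [PartialOrder A] [StarOrderedRing A]
    {S : Type*} (K : S → S → A) : Prop :=
  ∀ (n : ℕ) (s : Fin n → S) (a : Fin n → A),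
    0 ≤ ∑ i, ∑ j, star (a i) * K (s i) (s j) * a j

/-- An abstract C*-tensor product of the C*-algebras `A` and `B`: a C*-algebra `C`
together with a bilinear map `tmul : A → B → C` (elementary tensors `a ⊗ b`) which is
multiplicative and star-preserving in both variables jointly, and whose elementary
tensors have dense linear span in `C`. -/
structure CStarTensor (A B C : Type*)
    [CStarAlgebra A] [CStarAlgebra B] [CStarAlgebra C] where
  tmul : A →ₗ[ℂ] B →ₗ[ℂ] C
  tmul_mul : ∀ (a a' : A) (b b' : B), tmul (a * a') (b * b') = tmul a b * tmul a' b'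
  tmul_star : ∀ (a : A) (b : B), star (tmul a b) = tmul (star a) (star b)
  dense_span : Dense
    ((Submodule.span ℂ (Set.range fun p : A × B => tmul p.1 p.2) : Submodule ℂ C) : Set C)

namespace TPaux
variable {A : Type*} [CStarAlgebra A] [PartialOrder A] [StarOrderedRing A]

lemma diag_nonneg {n : ℕ} (G : Fin n → Fin n → A)
    (hpos : ∀ a : Fin n → A, 0 ≤ ∑ u, ∑ v, star (a u) * G u v * a v) (u : Fin n) :
    0 ≤ G u u := by
  have := hpos (fun i => if i = u then 1 else 0)
  simpa [apply_ite (star (R := A)), ite_mul, mul_ite, Finset.sum_ite_eq] using this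

lemma pair_eval {n : ℕ} (G : Fin n → Fin n → A)
    (hpos : ∀ a : Fin n → A, 0 ≤ ∑ u, ∑ v, star (a u) * G u v * a v) {u v : Fin n}
    (huv : u ≠ v) (c d : A) :
    0 ≤ star c * G u u * c + star d * G v u * c + star c * G u v * d + star d * G v v * d := by
  have := hpos (fun i => (if i = u then c else 0) + (if i = v then d else 0))
  simpa [apply_ite (star (R := A)), add_mul, mul_add, ite_mul, mul_ite,
    Finset.sum_add_distrib, Finset.sum_ite_eq, huv, huv.symm, add_assoc] using this

lemma herm {n : ℕ} (G : Fin n → Fin n → A)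
    (hpos : ∀ a : Fin n → A, 0 ≤ ∑ u, ∑ v, star (a u) * G u v * a v) (u v : Fin n) :
    star (G u v) = G v u := by
  rcases eq_or_ne u v with rfl | huv
  · exact (IsSelfAdjoint.of_nonneg (diag_nonneg G hpos u))
  · set a := G u v with ha
    set b := G v u with hb
    have hduu : star (G u u) = G u u := IsSelfAdjoint.of_nonneg (diag_nonneg G hpos u)
    have hdvv : star (G v v) = G v v := IsSelfAdjoint.of_nonneg (diag_nonneg G hpos v)
    have E1 : star b + star a = b + a := by
      have h1 : IsSelfAdjoint (G u u * 1 + G v u * 1 + G u v * 1 + G v v * 1) := by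
        have := pair_eval G hpos huv 1 1
        refine IsSelfAdjoint.of_nonneg ?_
        simpa using this
      have := h1.star_eq
      simp only [mul_one, star_add, hduu, hdvv] at this
      calc star b + star a
          = (G u u + star b + star a + G v v) - G u u - G v v := by abel
        _ = (G u u + b + a + G v v) - G u u - G v v := by rw [this]
        _ = b + a := by abel
    have E2 : Complex.I • star b + (-Complex.I) • star a
        = (-Complex.I) • b + Complex.I • a := by
      have h2 : IsSelfAdjoint (G u u + (-Complex.I) • b + Complex.I • a + G v v) := by
        have := pair_eval G hpos huv 1 (Complex.I • (1 : A))
        refine IsSelfAdjoint.of_nonneg ?_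
        simpa [star_smul, Complex.star_def, Complex.conj_I, smul_mul_assoc, mul_smul_comm,
          smul_smul, Complex.I_mul_I, neg_mul, neg_smul, neg_neg] using this
      have := h2.star_eq
      simp only [star_add, star_neg, star_smul, Complex.star_def, Complex.conj_I, map_neg,
        neg_neg, hduu, hdvv, neg_smul] at this
      calc Complex.I • star b + (-Complex.I) • star a
          = (G u u + Complex.I • star b + -(Complex.I • star a) + G v v)
            - G u u - G v v := by module
        _ = (G u u + -(Complex.I • b) + Complex.I • a + G v v) - G u u - G v v := by rw [this]
        _ = (-Complex.I) • b + Complex.I • a := by module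
    have E3 : star b + -star a = -b + a := by
      have := congrArg (fun x : A => (-Complex.I) • x) E2
      simpa [smul_add, smul_smul, neg_mul, mul_neg, Complex.I_mul_I, neg_neg, one_smul,
        neg_smul, sub_eq_add_neg] using this
    have E4 : (2 : ℂ) • star b = (2 : ℂ) • a := by
      have h := congrArg₂ (· + ·) E1 E3
      calc (2 : ℂ) • star b = star b + star a + (star b + -star a) := by module
        _ = b + a + (-b + a) := h
        _ = (2 : ℂ) • a := by module
    have hba : star b = a := smul_right_injective A two_ne_zero E4
    rw [← hba, star_star]




lemma eps_one_nonneg {ε : ℝ} (hε : 0 ≤ ε) : 0 ≤ ε • (1 : A) := by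
  have h : ε • (1:A) = star ((Real.sqrt ε) • (1:A)) * ((Real.sqrt ε) • (1:A)) := by
    rw [star_smul, star_one, smul_mul_smul_comm, one_mul]; simp [Real.mul_self_sqrt hε]
  rw [h]; exact star_mul_self_nonneg _

lemma eps_one_isUnit {ε : ℝ} (hε : 0 < ε) : IsUnit (ε • (1 : A)) := by
  refine ⟨⟨ε • 1, ε⁻¹ • 1, ?_, ?_⟩, rfl⟩ <;>
    rw [smul_mul_smul_comm, one_mul] <;> simp [mul_inv_cancel₀ hε.ne', inv_mul_cancel₀ hε.ne']

lemma factor : ∀ (m : ℕ) (G : Fin m → Fin m → A),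
    (∀ a : Fin m → A, 0 ≤ ∑ u, ∑ v, star (a u) * G u v * a v) →
    ∀ ε : ℝ, 0 < ε → ∃ r : Fin m → Fin m → A,
      ∀ u v, ∑ w, star (r w u) * r w v = G u v + if u = v then ε • 1 else 0 := by
  intro m
  induction m with
  | zero => exact fun G _ ε _ => ⟨0, fun u _ => u.elim0⟩
  | succ m IH =>
    intro G hpos ε hε
    have hherm := herm G hpos
    have hG00 : 0 ≤ G 0 0 := diag_nonneg G hpos 0
    set g : A := G 0 0 + ε • 1 with hgdef
    have hε1 : 0 ≤ (ε • (1:A)) := eps_one_nonneg hε.le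
    have hg0 : 0 ≤ g := add_nonneg hG00 hε1
    have hgu : IsUnit g := CStarAlgebra.isUnit_of_le _
      (le_add_of_nonneg_left hG00) (IsStrictlyPositive.iff_of_unital.mpr ⟨hε1, eps_one_isUnit hε⟩)
    set j : A := Ring.inverse g with hjdef
    have hgj : g * j = 1 := Ring.mul_inverse_cancel _ hgu
    have hjg : j * g = 1 := Ring.inverse_mul_cancel _ hgu
    have hgsa : star g = g := IsSelfAdjoint.of_nonneg hg0
    have hjsa : star j = j := by
      have h1 : star j * g = 1 := by rw [← hgsa, ← star_mul, hgj, star_one]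
      calc star j = star j * (g * j) := by rw [hgj, mul_one]
        _ = (star j * g) * j := by rw [mul_assoc]
        _ = j := by rw [h1, one_mul]
    have hjnn : 0 ≤ j := by
      have h2 : star j * g * j = j := by
        rw [hjsa, mul_assoc, hgj, mul_one]
      rw [← h2]; exact star_left_conjugate_nonneg hg0 j
    set s : A := CFC.sqrt g with hsdef
    have hs0 : 0 ≤ s := CFC.sqrt_nonneg g
    have hssa : star s = s := IsSelfAdjoint.of_nonneg hs0
    have hss : s * s = g := CFC.sqrt_mul_sqrt_self g hg0
    have hsg : s * g = g * s := by rw [← hss, ← mul_assoc, mul_assoc]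
    have hjs : j * s = s * j := by
      calc j * s = j * s * (g * j) := by rw [hgj, mul_one]
        _ = j * (s * g) * j := by noncomm_ring
        _ = j * (g * s) * j := by rw [hsg]
        _ = (j * g) * (s * j) := by noncomm_ring
        _ = s * j := by rw [hjg, one_mul]
    set H : Fin m → Fin m → A :=
      fun u v => G u.succ v.succ - G u.succ 0 * (j * G 0 v.succ) with hHdef
    have hHpos : ∀ a : Fin m → A, 0 ≤ ∑ u, ∑ v, star (a u) * H u v * a v := by
      intro a
      set Y : A := ∑ v, G 0 v.succ * a v with hYdef
      set c0 : A := -(j * Y) with hc0def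
      have h0 := hpos (Fin.cases c0 a)
      simp only [Fin.sum_univ_succ, Fin.cases_zero, Fin.cases_succ] at h0
      set SH : A := ∑ u, ∑ v, star (a u) * H u v * a v with hSHdef
      set X : A := star Y * j * G 0 0 * (j * Y) with hXdef
      set D : A := star Y * j * Y with hDdef
      have hstarc0 : star c0 = -(star Y * j) := by
        rw [hc0def, star_neg, star_mul, hjsa]
      have hstarY : star Y = ∑ u, star (a u) * G u.succ 0 := by
        rw [hYdef, star_sum]
        exact Finset.sum_congr rfl fun x _ => by rw [star_mul, hherm]
      have T1 : star c0 * G 0 0 * c0 = X := by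
        rw [hstarc0, hc0def, hXdef]; noncomm_ring
      have T2 : ∑ x, star c0 * G 0 x.succ * a x = -D := by
        calc ∑ x, star c0 * G 0 x.succ * a x
            = ∑ x, star c0 * (G 0 x.succ * a x) := by
              exact Finset.sum_congr rfl fun x _ => by rw [mul_assoc]
          _ = star c0 * Y := by rw [← Finset.mul_sum, ← hYdef]
          _ = -D := by rw [hstarc0, hDdef]; noncomm_ring
      have T3 : ∑ x, star (a x) * G x.succ 0 * c0 = -D := by
        calc ∑ x, star (a x) * G x.succ 0 * c0
            = (∑ x, star (a x) * G x.succ 0) * c0 := by rw [Finset.sum_mul]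
          _ = star Y * c0 := by rw [← hstarY]
          _ = -D := by rw [hc0def, hDdef]; noncomm_ring
      have T4 : SH = (∑ x, ∑ y, star (a x) * G x.succ y.succ * a y) - D := by
        have e1 : ∀ x y : Fin m, star (a x) * H x y * a y
            = star (a x) * G x.succ y.succ * a y
              - (star (a x) * G x.succ 0) * (j * (G 0 y.succ * a y)) := by
          intro x y
          show star (a x) * (G x.succ y.succ - G x.succ 0 * (j * G 0 y.succ)) * a y = _
          noncomm_ring
        calc SH = ∑ x, ∑ y, (star (a x) * G x.succ y.succ * a y
              - (star (a x) * G x.succ 0) * (j * (G 0 y.succ * a y))) := by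
              rw [hSHdef]
              exact Finset.sum_congr rfl fun x _ => Finset.sum_congr rfl fun y _ => e1 x y
          _ = (∑ x, ∑ y, star (a x) * G x.succ y.succ * a y)
              - ∑ x, ∑ y, (star (a x) * G x.succ 0) * (j * (G 0 y.succ * a y)) := by
              simp [Finset.sum_sub_distrib]
          _ = (∑ x, ∑ y, star (a x) * G x.succ y.succ * a y) - D := by
              congr 1
              calc ∑ x, ∑ y, (star (a x) * G x.succ 0) * (j * (G 0 y.succ * a y))
                  = ∑ x, (star (a x) * G x.succ 0) * (j * Y) := by
                    refine Finset.sum_congr rfl fun x _ => ?_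
                    rw [← Finset.mul_sum, ← Finset.mul_sum, ← hYdef]
                _ = (∑ x, star (a x) * G x.succ 0) * (j * Y) := by rw [Finset.sum_mul]
                _ = D := by rw [← hstarY, hDdef, mul_assoc]
      have hGsum : (∑ x, ∑ y, star (a x) * G x.succ y.succ * a y) = SH + D :=
        sub_eq_iff_eq_add.mp T4.symm
      rw [Finset.sum_add_distrib, T1, T2, T3, hGsum] at h0
      have hXD : X ≤ D := by
        have h5 := star_left_conjugate_le_conjugate (le_add_of_nonneg_right hε1 : G 0 0 ≤ g) (j * Y)
        have e5 : star (j * Y) * G 0 0 * (j * Y) = X := by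
          rw [star_mul, hjsa, hXdef]
        have e6 : star (j * Y) * g * (j * Y) = D := by
          rw [star_mul, hjsa, hDdef]
          calc star Y * j * g * (j * Y) = star Y * (j * g) * (j * Y) := by
                rw [mul_assoc (star Y) j g]
            _ = star Y * (j * Y) := by rw [hjg, mul_one]
            _ = star Y * j * Y := (mul_assoc _ _ _).symm
        rw [e5, e6] at h5
        exact h5
      calc (0:A) ≤ (X + -D + (-D + (SH + D))) + (D - X) :=
            add_nonneg h0 (sub_nonneg.2 hXD)
        _ = SH := by abel
    obtain ⟨t, ht⟩ := IH H hHpos ε hε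
    have hsjs : s * (j * s) = 1 := by
      calc s * (j * s) = s * (s * j) := by rw [hjs]
        _ = (s * s) * j := by rw [mul_assoc]
        _ = 1 := by rw [hss, hgj]
    have hsjjs : s * j * (j * s) = j := by
      calc s * j * (j * s) = j * s * (j * s) := by rw [← hjs]
        _ = j * (s * (j * s)) := by noncomm_ring
        _ = j := by rw [hsjs, mul_one]
    refine ⟨Fin.cases (Fin.cases s fun v => j * s * G 0 v.succ)
      (fun w => Fin.cases 0 fun v => t w v), fun u v => ?_⟩
    induction u using Fin.cases with
    | zero =>
      induction v using Fin.cases with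
      | zero =>
        simp only [Fin.sum_univ_succ, Fin.cases_zero, Fin.cases_succ, star_zero, zero_mul,
          Finset.sum_const_zero, add_zero]
        rw [if_pos trivial, hssa, hss, hgdef]
      | succ v =>
        simp only [Fin.sum_univ_succ, Fin.cases_zero, Fin.cases_succ, star_zero, zero_mul,
          Finset.sum_const_zero, add_zero]
        rw [if_neg (Fin.succ_ne_zero v).symm, add_zero]
        calc star s * (j * s * G 0 v.succ) = (s * (j * s)) * G 0 v.succ := by
              rw [hssa]; noncomm_ring
          _ = G 0 v.succ := by rw [hsjs, one_mul]
    | succ u =>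
      induction v using Fin.cases with
      | zero =>
        simp only [Fin.sum_univ_succ, Fin.cases_zero, Fin.cases_succ, mul_zero,
          Finset.sum_const_zero, add_zero]
        rw [if_neg (Fin.succ_ne_zero u), add_zero]
        calc star (j * s * G 0 u.succ) * s = G u.succ 0 * (s * (j * s)) := by
              rw [star_mul, star_mul, hssa, hjsa, hherm]; noncomm_ring
          _ = G u.succ 0 := by rw [hsjs, mul_one]
      | succ v =>
        simp only [Fin.sum_univ_succ, Fin.cases_zero, Fin.cases_succ]
        rw [ht u v]
        have e7 : star (j * s * G 0 u.succ) * (j * s * G 0 v.succ)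
            = G u.succ 0 * (j * G 0 v.succ) := by
          rw [star_mul, star_mul, hssa, hjsa, hherm]
          calc G u.succ 0 * (s * j) * (j * s * G 0 v.succ)
              = G u.succ 0 * (s * j * (j * s)) * G 0 v.succ := by noncomm_ring
            _ = G u.succ 0 * j * G 0 v.succ := by rw [hsjjs]
            _ = G u.succ 0 * (j * G 0 v.succ) := by rw [mul_assoc]
        rw [e7]
        have e8 : H u v = G u.succ v.succ - G u.succ 0 * (j * G 0 v.succ) := rfl
        rw [e8]
        by_cases huv : u = v
        · rw [if_pos huv, if_pos (by rw [huv])]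
          abel
        · rw [if_neg huv, if_neg (by simpa [Fin.succ_inj] using huv)]
          abel

end TPaux

/-- if `K₁ : X × X → A` and `K₂ : S × S → B` are positive definite
kernels, then the kernel `K((x,s),(y,t)) = K₁(x,y) ⊗ K₂(s,t)` with values in the
C*-tensor product `A ⊗ B` is positive definite. -/
theorem tensor_product_of_posDef_kernels_isPosDef
    {A B C : Type*} [CStarAlgebra A] [PartialOrder A] [StarOrderedRing A]
    [CStarAlgebra B] [PartialOrder B] [StarOrderedRing B]
    [CStarAlgebra C] [PartialOrder C] [StarOrderedRing C]
    (T : CStarTensor A B C)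
    {X S : Type*} [Nonempty X] [Nonempty S]
    (K₁ : X → X → A) (K₂ : S → S → B)
    (h₁ : IsPosDefKernel K₁) (h₂ : IsPosDefKernel K₂) :
    IsPosDefKernel (fun p q : X × S => T.tmul (K₁ p.1 q.1) (K₂ p.2 q.2)) := by
  intro n pts c
  dsimp only
  -- Step 1: reduce by density to coefficients in the span of elementary tensors
  suffices hD : ∀ c : Fin n → C,
      (∀ i, c i ∈ Submodule.span ℂ (Set.range fun q : A × B => T.tmul q.1 q.2)) →
      0 ≤ ∑ i, ∑ j, star (c i) * T.tmul (K₁ (pts i).1 (pts j).1) (K₂ (pts i).2 (pts j).2) * c j by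
    have hcont : Continuous fun c : Fin n → C =>
        ∑ i, ∑ j, star (c i) * T.tmul (K₁ (pts i).1 (pts j).1) (K₂ (pts i).2 (pts j).2) * c j := by
      refine continuous_finset_sum _ fun i _ => continuous_finset_sum _ fun j _ => ?_
      exact ((continuous_star.comp (continuous_apply i)).mul continuous_const).mul
        (continuous_apply j)
    have hclosed : IsClosed {c : Fin n → C | (0:C) ≤ (fun c : Fin n → C =>
        ∑ i, ∑ j, star (c i) * T.tmul (K₁ (pts i).1 (pts j).1) (K₂ (pts i).2 (pts j).2) * c j) c} :=
      isClosed_le continuous_const hcont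
    have hdense : Dense (Set.pi Set.univ fun _ : Fin n =>
        ((Submodule.span ℂ (Set.range fun q : A × B => T.tmul q.1 q.2) : Submodule ℂ C) : Set C)) :=
      dense_pi Set.univ fun i _ => T.dense_span
    have hsub : (Set.pi Set.univ fun _ : Fin n =>
        ((Submodule.span ℂ (Set.range fun q : A × B => T.tmul q.1 q.2) : Submodule ℂ C) : Set C)) ⊆
        {c : Fin n → C | (0:C) ≤ (fun c : Fin n → C =>
        ∑ i, ∑ j, star (c i) * T.tmul (K₁ (pts i).1 (pts j).1) (K₂ (pts i).2 (pts j).2) * c j) c} :=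
      fun c hc => hD c fun i => hc i (Set.mem_univ i)
    have hc : c ∈ closure (Set.pi Set.univ fun _ : Fin n =>
        ((Submodule.span ℂ (Set.range fun q : A × B => T.tmul q.1 q.2) : Submodule ℂ C) : Set C)) :=
      hdense c
    exact (hclosed.closure_subset_iff.mpr hsub) hc
  intro c hc
  -- Step 2: decompose coefficients into elementary tensors
  have hdec : ∀ i, ∃ (mi : ℕ) (α : Fin mi → A) (β : Fin mi → B),
      c i = ∑ k, T.tmul (α k) (β k) := by
    intro i
    obtain ⟨mi, f, gfn, hsum⟩ := Submodule.mem_span_set'.mp (hc i)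
    choose pq hpq using fun k => (gfn k).2
    refine ⟨mi, fun k => f k • (pq k).1, fun k => (pq k).2, ?_⟩
    rw [← hsum]
    refine Finset.sum_congr rfl fun k _ => ?_
    rw [← hpq k, map_smul, LinearMap.smul_apply]
  choose mf α β hc' using hdec
  -- Step 3: reindex by a sigma type
  set M := Fintype.card (Σ i : Fin n, Fin (mf i)) with hM
  set e : Fin M ≃ (Σ i : Fin n, Fin (mf i)) := (Fintype.equivFin (Σ i : Fin n, Fin (mf i))).symm
    with he
  set F : (Σ i : Fin n, Fin (mf i)) → (Σ i : Fin n, Fin (mf i)) → C := fun σ τ =>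
    T.tmul (star (α σ.1 σ.2) * K₁ (pts σ.1).1 (pts τ.1).1 * α τ.1 τ.2)
      (star (β σ.1 σ.2) * K₂ (pts σ.1).2 (pts τ.1).2 * β τ.1 τ.2) with hF
  set P : Fin M → Fin M → A := fun u v =>
    star (α (e u).1 (e u).2) * K₁ (pts (e u).1).1 (pts (e v).1).1 * α (e v).1 (e v).2 with hP
  set Q : Fin M → Fin M → B := fun u v =>
    star (β (e u).1 (e u).2) * K₂ (pts (e u).1).2 (pts (e v).1).2 * β (e v).1 (e v).2 with hQ
  have step_a : ∀ i j, star (c i) * T.tmul (K₁ (pts i).1 (pts j).1) (K₂ (pts i).2 (pts j).2) * c j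
      = ∑ k : Fin (mf i), ∑ l : Fin (mf j), F ⟨i, k⟩ ⟨j, l⟩ := by
    intro i j
    rw [hc' i, hc' j, star_sum, Finset.sum_mul, Finset.sum_mul_sum]
    refine Finset.sum_congr rfl fun k _ => Finset.sum_congr rfl fun l _ => ?_
    rw [T.tmul_star, ← T.tmul_mul, ← T.tmul_mul]
  have key : (∑ i, ∑ j,
        star (c i) * T.tmul (K₁ (pts i).1 (pts j).1) (K₂ (pts i).2 (pts j).2) * c j)
      = ∑ u : Fin M, ∑ v : Fin M, T.tmul (P u v) (Q u v) := by
    calc ∑ i, ∑ j, star (c i) * T.tmul (K₁ (pts i).1 (pts j).1) (K₂ (pts i).2 (pts j).2) * c j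
        = ∑ i, ∑ j, ∑ k : Fin (mf i), ∑ l : Fin (mf j), F ⟨i, k⟩ ⟨j, l⟩ :=
          Finset.sum_congr rfl fun i _ => Finset.sum_congr rfl fun j _ => step_a i j
      _ = ∑ i, ∑ k : Fin (mf i), ∑ j, ∑ l : Fin (mf j), F ⟨i, k⟩ ⟨j, l⟩ :=
          Finset.sum_congr rfl fun i _ => Finset.sum_comm
      _ = ∑ i, ∑ k : Fin (mf i), ∑ τ : Σ j : Fin n, Fin (mf j), F ⟨i, k⟩ τ := by
          refine Finset.sum_congr rfl fun i _ => Finset.sum_congr rfl fun k _ => ?_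
          rw [Finset.sum_sigma', Finset.univ_sigma_univ]
      _ = ∑ σ : Σ i : Fin n, Fin (mf i), ∑ τ : Σ j : Fin n, Fin (mf j), F σ τ := by
          rw [Finset.sum_sigma', Finset.univ_sigma_univ]
      _ = ∑ u : Fin M, ∑ v : Fin M, F (e u) (e v) := by
          rw [← Equiv.sum_comp e (fun σ => ∑ τ, F σ τ)]
          exact Finset.sum_congr rfl fun u _ => (Equiv.sum_comp e _).symm
      _ = ∑ u : Fin M, ∑ v : Fin M, T.tmul (P u v) (Q u v) := rfl
  rw [key]
  -- Step 4: the conjugated kernels are form-positive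
  have hPpos : ∀ a : Fin M → A, 0 ≤ ∑ u, ∑ v, star (a u) * P u v * a v := by
    intro a
    calc (0:A) ≤ ∑ u, ∑ v, star (α (e u).1 (e u).2 * a u)
          * K₁ (pts (e u).1).1 (pts (e v).1).1 * (α (e v).1 (e v).2 * a v) :=
          h₁ M (fun u => (pts (e u).1).1) (fun u => α (e u).1 (e u).2 * a u)
      _ = ∑ u, ∑ v, star (a u) * P u v * a v := by
          refine Finset.sum_congr rfl fun u _ => Finset.sum_congr rfl fun v _ => ?_
          simp only [hP, star_mul]
          noncomm_ring
  have hQpos : ∀ a : Fin M → B, 0 ≤ ∑ u, ∑ v, star (a u) * Q u v * a v := by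
    intro a
    calc (0:B) ≤ ∑ u, ∑ v, star (β (e u).1 (e u).2 * a u)
          * K₂ (pts (e u).1).2 (pts (e v).1).2 * (β (e v).1 (e v).2 * a v) :=
          h₂ M (fun u => (pts (e u).1).2) (fun u => β (e u).1 (e u).2 * a u)
      _ = ∑ u, ∑ v, star (a u) * Q u v * a v := by
          refine Finset.sum_congr rfl fun u _ => Finset.sum_congr rfl fun v _ => ?_
          simp only [hQ, star_mul]
          noncomm_ring
  -- Step 5: positivity up to ε
  set base : C := ∑ u : Fin M, ∑ v : Fin M, T.tmul (P u v) (Q u v) with hbase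
  have tsm₁ : ∀ (δ : ℝ) (x : A) (y : B), T.tmul (δ • x) y = δ • T.tmul x y := by
    intro δ x y; rw [← Complex.coe_smul, ← Complex.coe_smul, map_smul, LinearMap.smul_apply]
  have tsm₂ : ∀ (δ : ℝ) (x : A) (y : B), T.tmul x (δ • y) = δ • T.tmul x y := by
    intro δ x y; rw [← Complex.coe_smul, ← Complex.coe_smul, map_smul]
  set V₁ : C := ∑ u : Fin M, T.tmul (1:A) (Q u u) with hV₁
  set V₂ : C := ∑ u : Fin M, T.tmul (P u u) (1:B) with hV₂
  set V₃ : C := ∑ _u : Fin M, T.tmul (1:A) (1:B) with hV₃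
  have main : ∀ ε : ℝ, 0 < ε → 0 ≤ base + ε • (V₁ + V₂) + (ε * ε) • V₃ := by
    intro ε hε
    obtain ⟨r, hr⟩ := TPaux.factor M P hPpos ε hε
    obtain ⟨t, ht⟩ := TPaux.factor M Q hQpos ε hε
    have hpos_eps : 0 ≤ ∑ u : Fin M, ∑ v : Fin M,
        T.tmul (P u v + if u = v then ε • 1 else 0) (Q u v + if u = v then ε • 1 else 0) := by
      have e2 : ∀ u v : Fin M,
          T.tmul (P u v + if u = v then ε • 1 else 0) (Q u v + if u = v then ε • 1 else 0)
          = ∑ w : Fin M, ∑ z : Fin M,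
              star (T.tmul (r w u) (t z u)) * T.tmul (r w v) (t z v) := by
        intro u v
        rw [← hr u v, ← ht u v]
        calc T.tmul (∑ w, star (r w u) * r w v) (∑ z, star (t z u) * t z v)
            = ∑ z, T.tmul (∑ w, star (r w u) * r w v) (star (t z u) * t z v) :=
              map_sum _ _ _
          _ = ∑ z, ∑ w, T.tmul (star (r w u) * r w v) (star (t z u) * t z v) :=
              Finset.sum_congr rfl fun z _ => by rw [map_sum, LinearMap.sum_apply]
          _ = ∑ w, ∑ z, T.tmul (star (r w u) * r w v) (star (t z u) * t z v) :=
              Finset.sum_comm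
          _ = ∑ w, ∑ z, star (T.tmul (r w u) (t z u)) * T.tmul (r w v) (t z v) := by
              refine Finset.sum_congr rfl fun w _ => Finset.sum_congr rfl fun z _ => ?_
              rw [T.tmul_mul, T.tmul_star]
      calc (0:C) ≤ ∑ w : Fin M, ∑ z : Fin M,
              star (∑ u, T.tmul (r w u) (t z u)) * (∑ v, T.tmul (r w v) (t z v)) := by
            refine Finset.sum_nonneg fun w _ => Finset.sum_nonneg fun z _ => ?_
            exact star_mul_self_nonneg _
        _ = ∑ w : Fin M, ∑ z : Fin M, ∑ u : Fin M, ∑ v : Fin M,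
              star (T.tmul (r w u) (t z u)) * T.tmul (r w v) (t z v) := by
            refine Finset.sum_congr rfl fun w _ => Finset.sum_congr rfl fun z _ => ?_
            rw [star_sum, Finset.sum_mul_sum]
        _ = ∑ w : Fin M, ∑ u : Fin M, ∑ z : Fin M, ∑ v : Fin M,
              star (T.tmul (r w u) (t z u)) * T.tmul (r w v) (t z v) :=
            Finset.sum_congr rfl fun w _ => Finset.sum_comm
        _ = ∑ u : Fin M, ∑ w : Fin M, ∑ z : Fin M, ∑ v : Fin M,
              star (T.tmul (r w u) (t z u)) * T.tmul (r w v) (t z v) := Finset.sum_comm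
        _ = ∑ u : Fin M, ∑ w : Fin M, ∑ v : Fin M, ∑ z : Fin M,
              star (T.tmul (r w u) (t z u)) * T.tmul (r w v) (t z v) :=
            Finset.sum_congr rfl fun u _ => Finset.sum_congr rfl fun w _ => Finset.sum_comm
        _ = ∑ u : Fin M, ∑ v : Fin M, ∑ w : Fin M, ∑ z : Fin M,
              star (T.tmul (r w u) (t z u)) * T.tmul (r w v) (t z v) :=
            Finset.sum_congr rfl fun u _ => Finset.sum_comm
        _ = ∑ u : Fin M, ∑ v : Fin M,
              T.tmul (P u v + if u = v then ε • 1 else 0)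
                (Q u v + if u = v then ε • 1 else 0) :=
            (Finset.sum_congr rfl fun u _ => Finset.sum_congr rfl fun v _ => (e2 u v).symm)
    have expand : ∑ u : Fin M, ∑ v : Fin M,
        T.tmul (P u v + if u = v then ε • 1 else 0) (Q u v + if u = v then ε • 1 else 0)
        = base + ε • (V₁ + V₂) + (ε * ε) • V₃ := by
      calc ∑ u : Fin M, ∑ v : Fin M,
            T.tmul (P u v + if u = v then ε • 1 else 0) (Q u v + if u = v then ε • 1 else 0)
          = ∑ u : Fin M, ∑ v : Fin M, (T.tmul (P u v) (Q u v)
              + ((if u = v then ε • T.tmul 1 (Q u v) else 0)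
              + ((if u = v then ε • T.tmul (P u v) 1 else 0)
              + (if u = v then (ε * ε) • T.tmul (1:A) (1:B) else 0)))) := by
            refine Finset.sum_congr rfl fun u _ => Finset.sum_congr rfl fun v _ => ?_
            by_cases huv : u = v
            · simp only [if_pos huv, map_add, LinearMap.add_apply, tsm₁, tsm₂, smul_smul]
              abel
            · simp [if_neg huv]
        _ = base + ε • (V₁ + V₂) + (ε * ε) • V₃ := by
            simp only [Finset.sum_add_distrib, Finset.sum_ite_eq, Finset.mem_univ, if_true,
              hbase, hV₁, hV₂, hV₃, smul_add, Finset.smul_sum]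
            abel
    rw [← expand]
    exact hpos_eps
  -- Step 6: let ε → 0
  have h0 : Filter.Tendsto (fun k : ℕ => (1:ℝ)/(k+1)) Filter.atTop (nhds 0) :=
    tendsto_one_div_add_atTop_nhds_zero_nat
  have hseq : Filter.Tendsto (fun k : ℕ => base + ((1:ℝ)/(k+1)) • (V₁+V₂)
      + (((1:ℝ)/(k+1)) * ((1:ℝ)/(k+1))) • V₃) Filter.atTop (nhds base) := by
    have := ((tendsto_const_nhds (x := base)).add
      (h0.smul_const (V₁+V₂))).add ((h0.mul h0).smul_const V₃)
    simpa using this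
  have hmem : base ∈ {x : C | 0 ≤ x} := by
    refine CStarAlgebra.isClosed_nonneg.mem_of_tendsto hseq (Filter.Eventually.of_forall fun k => ?_)
    exact main _ (by positivity)
  exact hmem
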